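/- Let i, j ∈ {0,1} and let U_{i,j} ⊆ ℂP¹ × ℂP¹ be the open set of pairs ([a₀:a₁], [b₀:b₁]) with a_i ≠ 0 and b_j ≠ 0. The assignment 𝔗_{i,j}(h, [b₀:b₁]) = σ_j(b₀, b₁)·h·σ_i(c₀, c₁)⁻¹, where (c₀, c₁) are the complex components of (b₀ + b₁·j)·h, is a well-defined continuous map from Φ⁻¹(U_{i,j}) ⊆ S³ × ℂP¹ to the unit circle S¹ ⊂ ℂ ⊂ ℍ, and the map (Φ, 𝔗_{i,j}) : Φ⁻¹(U_{i,j}) → U_{i,j} × S¹ is a homeomorphism. -/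

import Mathlib

open Quaternion

noncomputable section

/-- The embedding of `ℂ` into the quaternions `ℍ` as the real span of `1` and `i`. -/
def cq (z : ℂ) : ℍ[ℝ] := ⟨z.re, z.im, 0, 0⟩

/-- The imaginary unit `j` of the quaternions. -/
def jq : ℍ[ℝ] := ⟨0, 0, 1, 0⟩

/-- `σ₀(a₀,a₁) = (1 + (a₁/a₀)·j)/‖1 + (a₁/a₀)·j‖`, defined for `a₀ ≠ 0`. -/
def sigma0 (a₀ a₁ : ℂ) : ℍ[ℝ] := ‖cq 1 + cq (a₁ / a₀) * jq‖⁻¹ • (cq 1 + cq (a₁ / a₀) * jq)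

/-- `σ₁(a₀,a₁) = (a₀/a₁ + j)/‖a₀/a₁ + j‖`, defined for `a₁ ≠ 0`. -/
def sigma1 (a₀ a₁ : ℂ) : ℍ[ℝ] := ‖cq (a₀ / a₁) + jq‖⁻¹ • (cq (a₀ / a₁) + jq)

/-- The complex components of a quaternion: `q = c₀ + c₁·j` with
`c₀ = re q + (im_i q)·i` and `c₁ = im_j q + (im_k q)·i`. -/
def comps (q : ℍ[ℝ]) : ℂ × ℂ := (⟨q.re, q.imI⟩, ⟨q.imJ, q.imK⟩)

/-- The complex projective line `ℂP¹`, as the projectivization of `ℂ²`. -/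
abbrev CP1 := Projectivization ℂ (ℂ × ℂ)

/-- The quotient topology on `ℂP¹`. -/
instance : TopologicalSpace CP1 := instTopologicalSpaceQuotient

/-- `σ_j` for `j ∈ {0,1}`. -/
def sigma' (j : Fin 2) (a₀ a₁ : ℂ) : ℍ[ℝ] := if j = 0 then sigma0 a₀ a₁ else sigma1 a₀ a₁

/-- The subset `U_{i,j} ⊆ ℂP¹ × ℂP¹` of pairs `([a₀:a₁],[b₀:b₁])` with `a_i ≠ 0` and
`b_j ≠ 0`. -/
def Uset (i j : Fin 2) : Set (CP1 × CP1) :=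
  {p | (∃ (v : ℂ × ℂ) (hv : v ≠ 0), Projectivization.mk ℂ v hv = p.1 ∧
          (if i = 0 then v.1 else v.2) ≠ 0) ∧
       (∃ (w : ℂ × ℂ) (hw : w ≠ 0), Projectivization.mk ℂ w hw = p.2 ∧
          (if j = 0 then w.1 else w.2) ≠ 0)}

section HopfAux
open Topology

/- ## auxiliary algebra -/

lemma cq_mul (z w : ℂ) : cq (z * w) = cq z * cq w := by
  ext <;> simp [Quaternion.re_mul, Quaternion.imI_mul, Quaternion.imJ_mul, Quaternion.imK_mul] <;> simp [cq, Complex.mul_re, Complex.mul_im]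
lemma cq_one : cq 1 = 1 := by ext <;> simp [cq]
lemma cq_zero : cq 0 = 0 := by ext <;> simp [cq]
lemma comps_eq_zero {u : ℍ[ℝ]} : comps u = 0 ↔ u = 0 := by
  constructor
  · intro h
    have h1 := congrArg Prod.fst h
    have h2 := congrArg Prod.snd h
    simp [comps, Complex.ext_iff] at h1 h2
    ext <;> simp [h1.1, h1.2, h2.1, h2.2]
  · rintro rfl; simp [comps, Prod.ext_iff, Complex.ext_iff]
def psi (v : ℂ × ℂ) : ℍ[ℝ] := cq v.1 + cq v.2 * jq
lemma psi_comps (u : ℍ[ℝ]) : psi (comps u) = u := by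
  ext <;> simp [psi, Quaternion.re_mul, Quaternion.imI_mul, Quaternion.imJ_mul, Quaternion.imK_mul] <;> simp [comps, cq, jq]
lemma comps_psi (v : ℂ × ℂ) : comps (psi v) = v := by
  simp [psi, comps, Quaternion.re_mul, Quaternion.imI_mul, Quaternion.imJ_mul, Quaternion.imK_mul] <;> simp [cq, jq, Complex.ext_iff]
lemma comps_cq_mul (w : ℂ) (u : ℍ[ℝ]) : comps (cq w * u) = w • comps u := by
  simp [comps, Prod.ext_iff, Complex.ext_iff, Complex.mul_re, Complex.mul_im,
    Quaternion.re_mul, Quaternion.imI_mul, Quaternion.imJ_mul, Quaternion.imK_mul] <;> simp [cq]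
lemma cq_ne_zero {z : ℂ} (hz : z ≠ 0) : cq z ≠ 0 := by
  intro h
  apply hz
  have := congrArg QuaternionAlgebra.re h
  have h2 := congrArg QuaternionAlgebra.imI h
  simp [cq] at this h2
  exact Complex.ext this h2
lemma cq_inv (z : ℂ) : (cq z)⁻¹ = cq z⁻¹ := by
  rcases eq_or_ne z 0 with rfl | hz
  · simp [cq_zero]
  · refine inv_eq_of_mul_eq_one_right ?_
    rw [← cq_mul, mul_inv_cancel₀ hz, cq_one]
lemma psi_ne_zero {v : ℂ × ℂ} (hv : v ≠ 0) : psi v ≠ 0 := by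
  intro h
  apply hv
  have := comps_psi v
  rw [h] at this
  rw [← this]
  simp [comps, Prod.ext_iff, Complex.ext_iff]
lemma rsmul_eq_cq_mul (r : ℝ) (u : ℍ[ℝ]) : r • u = cq r * u := by
  ext <;> simp [Quaternion.re_mul, Quaternion.imI_mul, Quaternion.imJ_mul, Quaternion.imK_mul] <;> simp [cq]
lemma sigma0_eq (a₀ a₁ : ℂ) (h : a₀ ≠ 0) :
    ∃ lam : ℂ, lam ≠ 0 ∧ sigma0 a₀ a₁ = cq lam * psi (a₀, a₁) := by
  have hx : cq 1 + cq (a₁ / a₀) * jq = cq a₀⁻¹ * psi (a₀, a₁) := by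
    rw [psi, mul_add, ← mul_assoc, ← cq_mul, ← cq_mul, inv_mul_cancel₀ h]
    congr 1
    rw [div_eq_inv_mul]
  have hxne : cq 1 + cq (a₁ / a₀) * jq ≠ 0 := by
    intro hh
    have := congrArg QuaternionAlgebra.re hh
    simp [Quaternion.re_mul] at this

    simp [cq, jq] at this
  refine ⟨((‖cq 1 + cq (a₁ / a₀) * jq‖⁻¹ : ℝ) : ℂ) * a₀⁻¹, ?_, ?_⟩
  · simp [norm_ne_zero_iff.2 hxne, h]
  · rw [sigma0, rsmul_eq_cq_mul, hx, ← mul_assoc, ← cq_mul]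
lemma sigma1_eq (a₀ a₁ : ℂ) (h : a₁ ≠ 0) :
    ∃ lam : ℂ, lam ≠ 0 ∧ sigma1 a₀ a₁ = cq lam * psi (a₀, a₁) := by
  have hx : cq (a₀ / a₁) + jq = cq a₁⁻¹ * psi (a₀, a₁) := by
    rw [psi, mul_add, ← mul_assoc, ← cq_mul, ← cq_mul, inv_mul_cancel₀ h, cq_one, one_mul]
    congr 1
    rw [div_eq_inv_mul]
  have hxne : cq (a₀ / a₁) + jq ≠ 0 := by
    intro hh
    have := congrArg QuaternionAlgebra.imJ hh
    simp at this
    simp [cq, jq] at this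
  refine ⟨((‖cq (a₀ / a₁) + jq‖⁻¹ : ℝ) : ℂ) * a₁⁻¹, ?_, ?_⟩
  · simp [norm_ne_zero_iff.2 hxne, h]
  · rw [sigma1, rsmul_eq_cq_mul, hx, ← mul_assoc, ← cq_mul]
lemma sigma'_eq (i : Fin 2) (a : ℂ × ℂ) (h : (if i = 0 then a.1 else a.2) ≠ 0) :
    ∃ lam : ℂ, lam ≠ 0 ∧ sigma' i a.1 a.2 = cq lam * psi a := by
  rcases eq_or_ne i 0 with rfl | hi
  · simp only [if_pos rfl] at h ⊢
    simpa [sigma'] using sigma0_eq a.1 a.2 h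
  · simp only [if_neg hi] at h ⊢
    simpa [sigma', hi] using sigma1_eq a.1 a.2 h
lemma norm_sigma' (i : Fin 2) (a₀ a₁ : ℂ) : ‖sigma' i a₀ a₁‖ = 1 := by
  have key : ∀ x : ℍ[ℝ], x ≠ 0 → ‖(‖x‖⁻¹ • x : ℍ[ℝ])‖ = 1 := by
    intro x hx
    rw [norm_smul, norm_inv, norm_norm, inv_mul_cancel₀ (norm_ne_zero_iff.2 hx)]
  rcases eq_or_ne i 0 with rfl | hi
  · apply key
    intro hh
    have := congrArg QuaternionAlgebra.re hh
    simp [Quaternion.re_mul] at this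

    simp [cq, jq] at this
  · simp only [sigma', if_neg hi, sigma1]
    apply key
    intro hh
    have := congrArg QuaternionAlgebra.imJ hh
    simp at this
    simp [cq, jq] at this
lemma sigma'_ne_zero (i : Fin 2) (a₀ a₁ : ℂ) : sigma' i a₀ a₁ ≠ 0 :=
  norm_ne_zero_iff.1 (by rw [norm_sigma' i a₀ a₁]; norm_num)
lemma sigma'_smul (i : Fin 2) (a : ℂ × ℂ) (c : ℂ) (hc : c ≠ 0) :
    sigma' i (c • a).1 (c • a).2 = sigma' i a.1 a.2 := by
  have h0 : (c * a.1) / (c * a.2) = a.1 / a.2 := mul_div_mul_left _ _ hc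
  have h1 : (c * a.2) / (c * a.1) = a.2 / a.1 := mul_div_mul_left _ _ hc
  simp only [sigma', sigma0, sigma1, Prod.smul_fst, Prod.smul_snd, smul_eq_mul, h0, h1]
lemma psi_smul (c : ℂ) (v : ℂ × ℂ) : psi (c • v) = cq c * psi v := by
  simp only [psi, Prod.smul_fst, Prod.smul_snd, smul_eq_mul, cq_mul, mul_add, mul_assoc]

/- ## topology on CP1 -/

def iq : ℍ[ℝ] := ⟨0, 1, 0, 0⟩
lemma continuous_cq : Continuous cq := by
  have : cq = fun z : ℂ => z.re • (1 : ℍ[ℝ]) + z.im • iq := by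
    funext z; ext <;> simp <;> simp [cq, iq]
  rw [this]
  exact (Complex.continuous_re.smul continuous_const).add
    (Complex.continuous_im.smul continuous_const)
lemma continuous_comps : Continuous comps := by
  have : comps = fun q : ℍ[ℝ] => ((⟨q.re, q.imI⟩ : ℂ), (⟨q.imJ, q.imK⟩ : ℂ)) := rfl
  rw [this]
  have hmk : ∀ (f g : ℍ[ℝ] → ℝ), Continuous f → Continuous g →
      Continuous (fun q => (⟨f q, g q⟩ : ℂ)) := by
    intro f g hf hg
    have : (fun q => (⟨f q, g q⟩ : ℂ)) = fun q => (f q : ℂ) + (g q : ℂ) * Complex.I := by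
      funext q; rw [Complex.mk_eq_add_mul_I]
    rw [this]
    exact ((Complex.continuous_ofReal.comp hf).add
      ((Complex.continuous_ofReal.comp hg).mul continuous_const))
  exact (hmk _ _ Quaternion.continuous_re Quaternion.continuous_imI).prodMk
    (hmk _ _ Quaternion.continuous_imJ Quaternion.continuous_imK)
lemma continuous_psi : Continuous psi :=
  ((continuous_cq.comp continuous_fst)).add
    (((continuous_cq.comp continuous_snd)).mul continuous_const)

abbrev Vnz := { v : ℂ × ℂ // v ≠ 0 }
def qmk (v : Vnz) : CP1 := Projectivization.mk ℂ v.1 v.2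
lemma qmk_quotient : IsQuotientMap qmk := isQuotientMap_quot_mk
lemma qmk_rel {a b : Vnz} (h : qmk a = qmk b) :
    ∃ c : ℂˣ, (c : ℂ) • (b : ℂ × ℂ) = (a : ℂ × ℂ) := by
  have := (Projectivization.mk_eq_mk_iff ℂ a.1 b.1 a.2 b.2).1 h
  obtain ⟨c, hc⟩ := this
  exact ⟨c, hc⟩
lemma isOpenMap_qmk : IsOpenMap qmk := by
  intro U hU
  rw [← (qmk_quotient).isOpen_preimage]
  have : qmk ⁻¹' (qmk '' U) = ⋃ c : ℂˣ, (fun v : Vnz => (⟨(c : ℂ) • v.1, by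
      simp [smul_ne_zero_iff, v.2, c.ne_zero]⟩ : Vnz)) ⁻¹' U := by
    ext v
    simp only [Set.mem_preimage, Set.mem_image, Set.mem_iUnion]
    constructor
    · rintro ⟨u, hu, huv⟩
      obtain ⟨c, hc⟩ := qmk_rel huv
      refine ⟨c, ?_⟩
      have hne : (c : ℂ) • v.1 ≠ 0 := by simp [smul_ne_zero_iff, v.2, c.ne_zero]
      have heq : (⟨(c : ℂ) • v.1, hne⟩ : Vnz) = u := Subtype.ext hc
      show (⟨(c : ℂ) • v.1, _⟩ : Vnz) ∈ U
      rw [heq]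
      exact hu
    · rintro ⟨c, hc⟩
      refine ⟨_, hc, ?_⟩
      unfold qmk
      rw [Projectivization.mk_eq_mk_iff]
      exact ⟨c, rfl⟩
  rw [this]
  apply isOpen_iUnion
  intro c
  apply hU.preimage
  exact Continuous.subtype_mk ((continuous_const_smul (c : ℂ)).comp continuous_subtype_val) _

/- ## the Hopf map -/

abbrev Sph := Metric.sphere (0 : ℍ[ℝ]) 1

lemma sph_norm (h : Sph) : ‖(h : ℍ[ℝ])‖ = 1 := mem_sphere_zero_iff_norm.1 h.2
lemma sph_ne_zero (h : Sph) : (h : ℍ[ℝ]) ≠ 0 :=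
  norm_ne_zero_iff.1 (by rw [sph_norm]; norm_num)

def Hq (h : ℍ[ℝ]) (v : ℂ × ℂ) : ℂ × ℂ := comps (psi v * h)

lemma Hq_ne_zero {h : ℍ[ℝ]} (hh : h ≠ 0) {v : ℂ × ℂ} (hv : v ≠ 0) : Hq h v ≠ 0 := by
  intro hz
  rw [Hq, comps_eq_zero] at hz
  exact (mul_ne_zero (psi_ne_zero hv) hh) hz

lemma Hq_smul (h : ℍ[ℝ]) (c : ℂ) (v : ℂ × ℂ) : Hq h (c • v) = c • Hq h v := by
  rw [Hq, psi_smul, mul_assoc, comps_cq_mul, Hq]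

def hopfP (p : Sph × CP1) : CP1 :=
  Quotient.lift (fun v : Vnz => qmk ⟨Hq p.1 v.1, Hq_ne_zero (sph_ne_zero p.1) v.2⟩)
    (by
      rintro a b hab
      have hab' : qmk a = qmk b := Quot.sound hab
      obtain ⟨c, hc⟩ := qmk_rel hab'
      unfold qmk
      rw [Projectivization.mk_eq_mk_iff]
      refine ⟨c, ?_⟩
      show (c : ℂ) • Hq _ b.1 = Hq _ a.1
      rw [← Hq_smul, hc]) p.2

lemma hopfP_mk (h : Sph) (v : ℂ × ℂ) (hv : v ≠ 0) :
    hopfP (h, Projectivization.mk ℂ v hv) =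
      Projectivization.mk ℂ (Hq h v) (Hq_ne_zero (sph_ne_zero h) hv) := rfl

lemma continuous_hopfP : Continuous hopfP := by
  have hsurj : Function.Surjective (fun p : Sph × Vnz => ((p.1, qmk p.2) : Sph × CP1)) := by
    rintro ⟨h, ℓ⟩
    obtain ⟨v, rfl⟩ := qmk_quotient.surjective ℓ
    exact ⟨(h, v), rfl⟩
  have hcont : Continuous (fun p : Sph × Vnz => ((p.1, qmk p.2) : Sph × CP1)) :=
    (continuous_fst.prodMk (qmk_quotient.continuous.comp continuous_snd))
  have hopen : IsOpenMap (fun p : Sph × Vnz => ((p.1, qmk p.2) : Sph × CP1)) :=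
    IsOpenMap.prodMap IsOpenMap.id isOpenMap_qmk
  have hq : IsQuotientMap (fun p : Sph × Vnz => ((p.1, qmk p.2) : Sph × CP1)) :=
    hopen.isQuotientMap hcont hsurj
  rw [hq.continuous_iff]
  show Continuous fun p : Sph × Vnz =>
    qmk ⟨Hq p.1 p.2.1, Hq_ne_zero (sph_ne_zero p.1) p.2.2⟩
  apply qmk_quotient.continuous.comp
  apply Continuous.subtype_mk
  show Continuous fun p : Sph × Vnz => comps (psi p.2.1 * (p.1 : ℍ[ℝ]))
  exact continuous_comps.comp
    ((continuous_psi.comp (continuous_subtype_val.comp continuous_snd)).mul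
      (continuous_subtype_val.comp continuous_fst))

def Phi (p : Sph × CP1) : CP1 × CP1 := (hopfP p, p.2)

lemma continuous_Phi : Continuous Phi := continuous_hopfP.prodMk continuous_snd

/- ## coordinates and the open sets -/

def coord (i : Fin 2) (v : ℂ × ℂ) : ℂ := if i = 0 then v.1 else v.2

lemma coord_smul (i : Fin 2) (c : ℂ) (v : ℂ × ℂ) : coord i (c • v) = c * coord i v := by
  fin_cases i <;> simp [coord]

def Oset (i : Fin 2) : Set CP1 :=
  {ℓ | ∃ (v : ℂ × ℂ) (hv : v ≠ 0), Projectivization.mk ℂ v hv = ℓ ∧ coord i v ≠ 0}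

lemma Uset_eq (i j : Fin 2) : Uset i j = {p | p.1 ∈ Oset i ∧ p.2 ∈ Oset j} := rfl

lemma mem_Oset_mk (i : Fin 2) (w : ℂ × ℂ) (hw : w ≠ 0) :
    Projectivization.mk ℂ w hw ∈ Oset i ↔ coord i w ≠ 0 := by
  constructor
  · rintro ⟨v, hv, heq, hne⟩
    obtain ⟨c, hc⟩ := (Projectivization.mk_eq_mk_iff ℂ v w hv hw).1 heq
    intro h0
    apply hne
    rw [← hc, Units.smul_def, coord_smul, h0, mul_zero]
  · intro hne
    exact ⟨w, hw, rfl, hne⟩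

lemma isOpen_Oset (i : Fin 2) : IsOpen (Oset i) := by
  rw [← qmk_quotient.isOpen_preimage]
  have : qmk ⁻¹' Oset i = {v : Vnz | coord i v.1 ≠ 0} := by
    ext v
    exact mem_Oset_mk i v.1 v.2
  rw [this]
  have hc : Continuous fun v : Vnz => coord i v.1 := by
    rcases eq_or_ne i 0 with rfl | hi
    · simpa [coord, Function.comp_def] using (continuous_fst.comp continuous_subtype_val)
    · simpa [coord, hi, Function.comp_def] using (continuous_snd.comp continuous_subtype_val)
  exact isOpen_compl_singleton.preimage hc

lemma isOpen_Uset (i j : Fin 2) : IsOpen (Uset i j) := by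
  rw [Uset_eq]
  exact ((isOpen_Oset i).preimage continuous_fst).inter ((isOpen_Oset j).preimage continuous_snd)

/- ## the section maps on CP1 -/

def Sig (i : Fin 2) : CP1 → ℍ[ℝ] :=
  Quotient.lift (fun v : Vnz => sigma' i v.1.1 v.1.2)
    (by
      rintro a b hab
      obtain ⟨c, hc⟩ := qmk_rel (Quot.sound hab : qmk a = qmk b)
      show sigma' i a.1.1 a.1.2 = sigma' i b.1.1 b.1.2
      rw [← hc]
      exact sigma'_smul i b.1 (c : ℂ) c.ne_zero)

lemma Sig_mk (i : Fin 2) (v : ℂ × ℂ) (hv : v ≠ 0) :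
    Sig i (Projectivization.mk ℂ v hv) = sigma' i v.1 v.2 := rfl

lemma norm_Sig (i : Fin 2) (ℓ : CP1) : ‖Sig i ℓ‖ = 1 := by
  obtain ⟨v, rfl⟩ := qmk_quotient.surjective ℓ
  exact norm_sigma' i v.1.1 v.1.2

lemma Sig_ne_zero (i : Fin 2) (ℓ : CP1) : Sig i ℓ ≠ 0 :=
  norm_ne_zero_iff.1 (by rw [norm_Sig]; norm_num)

lemma contOn_of_lift {X : Type*} [TopologicalSpace X] (g : CP1 → X) (O : Set CP1)
    (hO : IsOpen O) (h : ContinuousOn (g ∘ qmk) (qmk ⁻¹' O)) : ContinuousOn g O := by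
  rw [continuousOn_open_iff hO]
  intro t ht
  rw [← qmk_quotient.isOpen_preimage, Set.preimage_inter]
  have := (continuousOn_open_iff (hO.preimage qmk_quotient.continuous)).1 h t ht
  simpa [Set.preimage_comp] using this

lemma contOn_Sig (i : Fin 2) : ContinuousOn (Sig i) (Oset i) := by
  apply contOn_of_lift _ _ (isOpen_Oset i)
  have hpre : qmk ⁻¹' Oset i = {v : Vnz | coord i v.1 ≠ 0} := by
    ext v; exact mem_Oset_mk i v.1 v.2
  rw [hpre]
  have hval : ContinuousOn (fun v : Vnz => (v.1 : ℂ × ℂ)) {v : Vnz | coord i v.1 ≠ 0} :=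
    continuous_subtype_val.continuousOn
  have hsmul : ∀ (x : Vnz → ℍ[ℝ]), ContinuousOn x {v : Vnz | coord i v.1 ≠ 0} →
      (∀ v, x v ≠ 0) →
      ContinuousOn (fun v : Vnz => ‖x v‖⁻¹ • x v) {v : Vnz | coord i v.1 ≠ 0} := by
    intro x hx hxne
    exact ((hx.norm.inv₀ (fun v _ => norm_ne_zero_iff.2 (hxne v))).smul hx)
  have hnum0 : ∀ z : ℂ, cq 1 + cq z * jq ≠ 0 := by
    intro z hh
    have := congrArg QuaternionAlgebra.re hh
    simp [Quaternion.re_mul] at this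

    simp [cq, jq] at this
  have hnum1 : ∀ z : ℂ, cq z + jq ≠ 0 := by
    intro z hh
    have := congrArg QuaternionAlgebra.imJ hh
    simp at this
    simp [cq, jq] at this
  rcases eq_or_ne i 0 with rfl | hi
  · show ContinuousOn (fun v : Vnz => sigma' 0 v.1.1 v.1.2) _
    simp only [sigma', if_pos rfl, sigma0]
    apply hsmul
    · apply ContinuousOn.add continuousOn_const
      apply ContinuousOn.mul _ continuousOn_const
      apply continuous_cq.comp_continuousOn
      apply ContinuousOn.div
      · exact (continuous_snd.comp continuous_subtype_val).continuousOn
      · exact (continuous_fst.comp continuous_subtype_val).continuousOn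
      · intro v hv
        simpa [coord] using hv
    · intro v
      exact hnum0 _
  · show ContinuousOn (fun v : Vnz => sigma' i v.1.1 v.1.2) _
    simp only [sigma', if_neg hi, sigma1]
    apply hsmul
    · apply ContinuousOn.add _ continuousOn_const
      apply continuous_cq.comp_continuousOn
      apply ContinuousOn.div
      · exact (continuous_fst.comp continuous_subtype_val).continuousOn
      · exact (continuous_snd.comp continuous_subtype_val).continuousOn
      · intro v hv
        simpa [coord, hi] using hv
    · intro v
      exact hnum1 _

/- ## key algebraic computations -/

lemma Tval (i j : Fin 2) (h : ℍ[ℝ]) (hh : h ≠ 0) (b : ℂ × ℂ) (hb : b ≠ 0)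
    (hbj : coord j b ≠ 0) (hci : coord i (Hq h b) ≠ 0) :
    ∃ w : ℂ, sigma' j b.1 b.2 * h * (sigma' i (Hq h b).1 (Hq h b).2)⁻¹ = cq w := by
  obtain ⟨μ, hμ, hμe⟩ := sigma'_eq j b hbj
  obtain ⟨lam, hlam, hlame⟩ := sigma'_eq i (Hq h b) hci
  have hne : psi b * h ≠ 0 := mul_ne_zero (psi_ne_zero hb) hh
  refine ⟨μ * lam⁻¹, ?_⟩
  rw [hμe, hlame, Hq, psi_comps, mul_inv_rev, mul_assoc (cq μ) (psi b) h,
    mul_assoc (cq μ), mul_inv_cancel_left₀ hne, cq_inv, ← cq_mul]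

lemma Hq_section (i j : Fin 2) (a b : ℂ × ℂ) (ha : a ≠ 0) (hb : b ≠ 0)
    (hai : coord i a ≠ 0) (hbj : coord j b ≠ 0) (ζ : ℂ) (hz : ζ ≠ 0) :
    ∃ w : ℂ, w ≠ 0 ∧
      Hq ((sigma' j b.1 b.2)⁻¹ * cq ζ * sigma' i a.1 a.2) b = w • a := by
  obtain ⟨μ, hμ, hμe⟩ := sigma'_eq j b hbj
  obtain ⟨lam, hlam, hlame⟩ := sigma'_eq i a hai
  refine ⟨μ⁻¹ * ζ * lam, by simp [hμ, hz, hlam], ?_⟩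
  rw [Hq, hμe, hlame, mul_inv_rev, cq_inv]
  simp only [mul_assoc]
  rw [mul_inv_cancel_left₀ (psi_ne_zero hb)]
  rw [comps_cq_mul, comps_cq_mul, comps_cq_mul, comps_psi, smul_smul, smul_smul, mul_assoc]

lemma cancel1 {G : Type*} [DivisionRing G] (a b h : G) (ha : a ≠ 0) (hb : b ≠ 0) :
    a⁻¹ * (a * h * b⁻¹) * b = h := by
  rw [mul_assoc a h, inv_mul_cancel_left₀ ha, inv_mul_cancel_right₀ hb]

lemma cancel2 {G : Type*} [DivisionRing G] (a b z : G) (ha : a ≠ 0) (hb : b ≠ 0) :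
    a * (a⁻¹ * z * b) * b⁻¹ = z := by
  rw [mul_assoc a⁻¹ z, mul_inv_cancel_left₀ ha]
  exact mul_inv_cancel_right₀ hb z

/- ## the trivialising map -/

def Tfun (i j : Fin 2) (x : Sph × CP1) : ℍ[ℝ] :=
  Sig j x.2 * (x.1 : ℍ[ℝ]) * (Sig i (hopfP x))⁻¹

lemma Tprops (i j : Fin 2) (h : Sph) (ℓ : CP1) (hx : Phi (h, ℓ) ∈ Uset i j) :
    ‖Tfun i j (h, ℓ)‖ = 1 ∧ (Tfun i j (h, ℓ)).imJ = 0 ∧ (Tfun i j (h, ℓ)).imK = 0 := by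
  have hnorm : ‖Tfun i j (h, ℓ)‖ = 1 := by
    rw [Tfun, norm_mul, norm_mul, norm_inv, norm_Sig, norm_Sig, sph_norm]; norm_num
  refine ⟨hnorm, ?_⟩
  obtain ⟨hm1, hm2⟩ := hx
  obtain ⟨b, hbne, hbeq, hbj⟩ := hm2
  have hbeq' : Projectivization.mk ℂ b hbne = ℓ := hbeq
  subst hbeq'
  obtain ⟨w, hwne, hweq, hwi⟩ := hm1
  have hweq' : Projectivization.mk ℂ w hwne
      = Projectivization.mk ℂ (Hq h b) (Hq_ne_zero (sph_ne_zero h) hbne) := hweq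
  have hmem : Projectivization.mk ℂ (Hq h b) (Hq_ne_zero (sph_ne_zero h) hbne) ∈ Oset i :=
    ⟨w, hwne, hweq', hwi⟩
  have hci := (mem_Oset_mk i (Hq h b) _).1 hmem
  obtain ⟨wζ, hwζ⟩ := Tval i j h (sph_ne_zero h) b hbne hbj hci
  have : Tfun i j (h, Projectivization.mk ℂ b hbne) = cq wζ := hwζ
  rw [this]
  simp [cq]

lemma contOn_Tfun (i j : Fin 2) : ContinuousOn (Tfun i j) (Phi ⁻¹' Uset i j) := by
  have f1 : ContinuousOn (fun x : Sph × CP1 => Sig j x.2) (Phi ⁻¹' Uset i j) := by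
    apply (contOn_Sig j).comp continuous_snd.continuousOn
    intro x hx
    exact hx.2
  have f2 : ContinuousOn (fun x : Sph × CP1 => (x.1 : ℍ[ℝ])) (Phi ⁻¹' Uset i j) :=
    (continuous_subtype_val.comp continuous_fst).continuousOn
  have f3 : ContinuousOn (fun x : Sph × CP1 => (Sig i (hopfP x))⁻¹) (Phi ⁻¹' Uset i j) := by
    apply ContinuousOn.inv₀
    · apply (contOn_Sig i).comp continuous_hopfP.continuousOn
      intro x hx
      exact hx.1
    · intro x _
      exact Sig_ne_zero i _
  exact (f1.mul f2).mul f3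

/- ## the trivialisation homeomorphism -/

lemma eq_cq_self (z : ℍ[ℝ]) (h1 : z.imJ = 0) (h2 : z.imK = 0) : z = cq ⟨z.re, z.imI⟩ := by
  ext <;> simp [cq, h1, h2]

abbrev Circ := {z : ℍ[ℝ] // ‖z‖ = 1 ∧ z.imJ = 0 ∧ z.imK = 0}

def trivTo (i j : Fin 2) (x : ↥(Phi ⁻¹' Uset i j)) : ↥(Uset i j) × Circ :=
  (⟨Phi x.1, x.2⟩, ⟨Tfun i j x.1, Tprops i j x.1.1 x.1.2 x.2⟩)

def trivInvH (i j : Fin 2) (p : ↥(Uset i j) × Circ) : ℍ[ℝ] :=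
  (Sig j p.1.1.2)⁻¹ * p.2.1 * Sig i p.1.1.1

lemma norm_trivInvH (i j : Fin 2) (p : ↥(Uset i j) × Circ) : ‖trivInvH i j p‖ = 1 := by
  rw [trivInvH, norm_mul, norm_mul, norm_inv, norm_Sig, norm_Sig, p.2.2.1]; norm_num

def trivSph (i j : Fin 2) (p : ↥(Uset i j) × Circ) : Sph :=
  ⟨trivInvH i j p, mem_sphere_zero_iff_norm.2 (norm_trivInvH i j p)⟩

lemma hopf_section' (i j : Fin 2) (p : ↥(Uset i j) × Circ) :
    hopfP (trivSph i j p, p.1.1.2) = p.1.1.1 := by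
  obtain ⟨⟨a, hane, haeq, hai⟩, ⟨b, hbne, hbeq, hbj⟩⟩ := p.1.2
  have hz : (p.2.1 : ℍ[ℝ]) = cq ⟨(p.2.1 : ℍ[ℝ]).re, (p.2.1 : ℍ[ℝ]).imI⟩ :=
    eq_cq_self _ p.2.2.2.1 p.2.2.2.2
  set ζ : ℂ := ⟨(p.2.1 : ℍ[ℝ]).re, (p.2.1 : ℍ[ℝ]).imI⟩ with hζ
  have hzne : (p.2.1 : ℍ[ℝ]) ≠ 0 := norm_ne_zero_iff.1 (by rw [p.2.2.1]; norm_num)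
  have hζne : ζ ≠ 0 := by
    intro h0
    apply hzne
    rw [hz, h0, cq_zero]
  have hH : trivInvH i j p = (sigma' j b.1 b.2)⁻¹ * cq ζ * sigma' i a.1 a.2 := by
    rw [trivInvH, ← haeq, ← hbeq, Sig_mk, Sig_mk, ← hz]
  obtain ⟨w, hwne, hHq⟩ := Hq_section i j a b hane hbne hai hbj ζ hζne
  have hkey : hopfP (trivSph i j p, Projectivization.mk ℂ b hbne) =
      Projectivization.mk ℂ a hane := by
    rw [hopfP_mk]
    rw [Projectivization.mk_eq_mk_iff']
    refine ⟨w, ?_⟩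
    show w • a = Hq (trivSph i j p : ℍ[ℝ]) b
    rw [← hHq]
    congr 1
    exact hH.symm
  rw [← hbeq, hkey, haeq]

lemma Phi_trivInv (i j : Fin 2) (p : ↥(Uset i j) × Circ) :
    Phi (trivSph i j p, p.1.1.2) = p.1.1 := by
  have : Phi (trivSph i j p, p.1.1.2) = (p.1.1.1, p.1.1.2) := by
    rw [Phi, hopf_section']
  rw [this]

def trivInv (i j : Fin 2) (p : ↥(Uset i j) × Circ) : ↥(Phi ⁻¹' Uset i j) :=
  ⟨(trivSph i j p, p.1.1.2), by
    show Phi _ ∈ Uset i j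
    rw [Phi_trivInv]
    exact p.1.2⟩

lemma Tfun_trivInv (i j : Fin 2) (p : ↥(Uset i j) × Circ) :
    Tfun i j (trivSph i j p, p.1.1.2) = p.2.1 := by
  show Sig j p.1.1.2 * (trivSph i j p : ℍ[ℝ]) * (Sig i (hopfP (trivSph i j p, p.1.1.2)))⁻¹ = _
  rw [hopf_section']
  exact cancel2 _ _ _ (Sig_ne_zero j _) (Sig_ne_zero i _)

lemma triv_left_inv (i j : Fin 2) (x : ↥(Phi ⁻¹' Uset i j)) :
    trivInv i j (trivTo i j x) = x := by
  apply Subtype.ext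
  apply Prod.ext
  · apply Subtype.ext
    show trivInvH i j (trivTo i j x) = (x.1.1 : ℍ[ℝ])
    show (Sig j x.1.2)⁻¹ * Tfun i j x.1 * Sig i (hopfP x.1) = (x.1.1 : ℍ[ℝ])
    exact cancel1 _ _ _ (Sig_ne_zero j _) (Sig_ne_zero i _)
  · rfl

lemma triv_right_inv (i j : Fin 2) (p : ↥(Uset i j) × Circ) :
    trivTo i j (trivInv i j p) = p := by
  apply Prod.ext
  · exact Subtype.ext (Phi_trivInv i j p)
  · exact Subtype.ext (Tfun_trivInv i j p)

lemma continuous_trivTo (i j : Fin 2) : Continuous (trivTo i j) := by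
  apply Continuous.prodMk
  · exact Continuous.subtype_mk (continuous_Phi.comp continuous_subtype_val) _
  · exact Continuous.subtype_mk (contOn_Tfun i j).restrict _

lemma continuous_trivInvH (i j : Fin 2) : Continuous (trivInvH i j) := by
  have hb : Continuous fun p : ↥(Uset i j) × Circ => p.1.1.2 :=
    continuous_snd.comp (continuous_subtype_val.comp continuous_fst)
  have ha : Continuous fun p : ↥(Uset i j) × Circ => p.1.1.1 :=
    continuous_fst.comp (continuous_subtype_val.comp continuous_fst)
  have g1 : Continuous fun p : ↥(Uset i j) × Circ => Sig j p.1.1.2 :=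
    (contOn_Sig j).comp_continuous hb (fun p => p.1.2.2)
  have g3 : Continuous fun p : ↥(Uset i j) × Circ => Sig i p.1.1.1 :=
    (contOn_Sig i).comp_continuous ha (fun p => p.1.2.1)
  have g2 : Continuous fun p : ↥(Uset i j) × Circ => (p.2.1 : ℍ[ℝ]) :=
    continuous_subtype_val.comp continuous_snd
  exact ((g1.inv₀ (fun p => Sig_ne_zero j _)).mul g2).mul g3

lemma continuous_trivInv (i j : Fin 2) : Continuous (trivInv i j) := by
  apply Continuous.subtype_mk
  apply Continuous.prodMk
  · exact Continuous.subtype_mk (continuous_trivInvH i j) _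
  · exact continuous_snd.comp (continuous_subtype_val.comp continuous_fst)

def trivHomeo (i j : Fin 2) : ↥(Phi ⁻¹' Uset i j) ≃ₜ ↥(Uset i j) × Circ where
  toFun := trivTo i j
  invFun := trivInv i j
  left_inv := triv_left_inv i j
  right_inv := triv_right_inv i j
  continuous_toFun := continuous_trivTo i j
  continuous_invFun := continuous_trivInv i j


end HopfAux

/-- The parametrised Hopf map `Φ` admits over `U_{i,j}` the well-defined continuous
trivialising map `𝔗_{i,j}(h,[b₀:b₁]) = σ_j(b₀,b₁)·h·σ_i(c₀,c₁)⁻¹` with values in the unit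
circle `S¹ ⊂ ℂ ⊂ ℍ`, and `(Φ, 𝔗_{i,j}) : Φ⁻¹(U_{i,j}) → U_{i,j} × S¹` is a
homeomorphism. -/
theorem local_trivialisation_of_parametrised_hopf (i j : Fin 2) :
    ∃ Φ : Metric.sphere (0 : ℍ[ℝ]) 1 × CP1 → CP1 × CP1,
      (∀ (h : Metric.sphere (0 : ℍ[ℝ]) 1) (b₀ b₁ : ℂ) (hb : ((b₀, b₁) : ℂ × ℂ) ≠ 0)
        (hc : comps ((cq b₀ + cq b₁ * jq) * (h : ℍ[ℝ])) ≠ 0),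
        Φ (h, Projectivization.mk ℂ (b₀, b₁) hb) =
          (Projectivization.mk ℂ _ hc, Projectivization.mk ℂ (b₀, b₁) hb)) ∧
      Continuous Φ ∧
      ∃ T : (Φ ⁻¹' Uset i j) → ℍ[ℝ],
        (∀ (x : Φ ⁻¹' Uset i j) (b₀ b₁ : ℂ) (hb : ((b₀, b₁) : ℂ × ℂ) ≠ 0),
          Projectivization.mk ℂ (b₀, b₁) hb = x.1.2 →
          T x = sigma' j b₀ b₁ * (x.1.1 : ℍ[ℝ]) *
            (sigma' i (comps ((cq b₀ + cq b₁ * jq) * (x.1.1 : ℍ[ℝ]))).1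
              (comps ((cq b₀ + cq b₁ * jq) * (x.1.1 : ℍ[ℝ]))).2)⁻¹) ∧
        (∀ x, ‖T x‖ = 1 ∧ (T x).imJ = 0 ∧ (T x).imK = 0) ∧
        Continuous T ∧
        ∃ e : (Φ ⁻¹' Uset i j) ≃ₜ
            (Uset i j) × {z : ℍ[ℝ] // ‖z‖ = 1 ∧ z.imJ = 0 ∧ z.imK = 0},
          ∀ x, ((e x).1 : CP1 × CP1) = Φ x.1 ∧ ((e x).2 : ℍ[ℝ]) = T x := by
  refine ⟨Phi, ?_, continuous_Phi, fun x => Tfun i j x.1, ?_, ?_, ?_, trivHomeo i j, ?_⟩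
  · intro h b₀ b₁ hb hc
    rfl
  · rintro ⟨⟨h, ℓ⟩, hmem⟩ b₀ b₁ hb hmk
    dsimp only at hmk ⊢
    subst hmk
    rfl
  · rintro ⟨⟨h, ℓ⟩, hmem⟩
    exact Tprops i j h ℓ hmem
  · exact (contOn_Tfun i j).restrict
  · intro x
    exact ⟨rfl, rfl⟩
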